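/- Let d ∈ D be a diagonal matrix with entries d_1, …, d_n ∈ ℚ_p^*, and set ‖d‖_D = max(max_i |d_i|_p, max_i |d_i⁻¹|_p). Let u ∈ U be upper unipotent with ultralength ‖u‖ = max_{i<j} |u_ij|_p^{1/(j-i)}. Then ‖d⁻¹ u d‖ ≤ ‖d‖_D² · ‖u‖. -/

import Mathlib

/-- Upper unipotent matrix: upper triangular with all diagonal entries `1`. -/
def IsUpperUnipotent {p : ℕ} [Fact p.Prime] {n : ℕ}
    (M : Matrix (Fin n) (Fin n) ℚ_[p]) : Prop :=
  (∀ i j : Fin n, (j : ℕ) < (i : ℕ) → M i j = 0) ∧ ∀ i : Fin n, M i i = 1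

/-- `‖A‖ = max_{i<j} |a_{ij}|_p^{1/(j-i)}` for an upper unipotent matrix `A`. -/
noncomputable def unorm {p : ℕ} [Fact p.Prime] {n : ℕ}
    (M : Matrix (Fin n) (Fin n) ℚ_[p]) : ℝ :=
  ⨆ q : Fin n × Fin n,
    if (q.1 : ℕ) < (q.2 : ℕ)
    then ‖M q.1 q.2‖ ^ ((((q.2 : ℕ) : ℝ) - ((q.1 : ℕ) : ℝ))⁻¹)
    else 0

/-- `‖d‖_D = max_i max(|d_i|_p, |d_i⁻¹|_p)` for a diagonal matrix with entries `d i`. -/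
noncomputable def dnorm {p : ℕ} [Fact p.Prime] {n : ℕ} (d : Fin n → ℚ_[p]) : ℝ :=
  ⨆ i : Fin n, max ‖d i‖ ‖(d i)⁻¹‖

lemma unorm_nonneg {p : ℕ} [Fact p.Prime] {n : ℕ}
    (M : Matrix (Fin n) (Fin n) ℚ_[p]) : 0 ≤ unorm M :=
  Real.iSup_nonneg fun q => by
    by_cases h : (q.1 : ℕ) < (q.2 : ℕ) <;> simp [h, Real.rpow_nonneg]

lemma dnorm_nonneg {p : ℕ} [Fact p.Prime] {n : ℕ} (d : Fin n → ℚ_[p]) : 0 ≤ dnorm d :=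
  Real.iSup_nonneg fun i => le_max_of_le_left (norm_nonneg _)

lemma le_dnorm {p : ℕ} [Fact p.Prime] {n : ℕ} (d : Fin n → ℚ_[p]) (i : Fin n) :
    max ‖d i‖ ‖(d i)⁻¹‖ ≤ dnorm d :=
  le_ciSup (f := fun i => max ‖d i‖ ‖(d i)⁻¹‖)
    (Set.Finite.bddAbove (Set.finite_range _)) i

lemma one_le_dnorm {p : ℕ} [Fact p.Prime] {n : ℕ} (d : Fin n → ℚ_[p])
    (hd : ∀ i, d i ≠ 0) (i : Fin n) : 1 ≤ dnorm d := by
  refine le_trans ?_ (le_dnorm d i)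
  rcases le_or_gt 1 ‖d i‖ with h | h
  · exact le_max_of_le_left h
  · refine le_max_of_le_right ?_
    rw [norm_inv]
    have hpos : 0 < ‖d i‖ := norm_pos_iff.mpr (hd i)
    exact (one_le_inv₀ hpos).mpr h.le

/-- Conjugation bound: `‖d⁻¹ u d‖ ≤ ‖d‖_D² ⬝ ‖u‖` where `(d⁻¹ u d)_{ij} = d_i⁻¹ u_{ij} d_j`. -/
theorem unorm_conj_le (p : ℕ) [Fact p.Prime] (n : ℕ)
    (d : Fin n → ℚ_[p]) (hd : ∀ i, d i ≠ 0)
    (u : Matrix (Fin n) (Fin n) ℚ_[p]) (hu : IsUpperUnipotent u) :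
    unorm (Matrix.of fun i j => (d i)⁻¹ * u i j * d j) ≤ dnorm d ^ 2 * unorm u := by
  have hRHS : 0 ≤ dnorm d ^ 2 * unorm u := by
    have := dnorm_nonneg d; have := unorm_nonneg u; positivity
  refine Real.iSup_le (fun q => ?_) hRHS
  obtain ⟨i, j⟩ := q
  by_cases hij : (i : ℕ) < (j : ℕ)
  · simp only [hij, if_true, Matrix.of_apply]
    set r : ℝ := (((j : ℕ) : ℝ) - ((i : ℕ) : ℝ))⁻¹ with hr
    have hden : (1 : ℝ) ≤ ((j : ℕ) : ℝ) - ((i : ℕ) : ℝ) := by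
      have : (i : ℕ) + 1 ≤ (j : ℕ) := hij
      push_cast
      have : ((i : ℕ) : ℝ) + 1 ≤ ((j : ℕ) : ℝ) := by exact_mod_cast this
      linarith
    have hr0 : 0 < r := by rw [hr]; positivity
    have hr1 : r ≤ 1 := by
      rw [hr]
      exact inv_le_one_of_one_le₀ hden
    have hd1 : 1 ≤ dnorm d := one_le_dnorm d hd i
    have hd0 : (0 : ℝ) ≤ dnorm d := dnorm_nonneg d
    have hu0 : (0 : ℝ) ≤ unorm u := unorm_nonneg u
    have hA : ‖(d i)⁻¹‖ ≤ dnorm d := le_trans (le_max_right _ _) (le_dnorm d i)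
    have hC : ‖d j‖ ≤ dnorm d := le_trans (le_max_left _ _) (le_dnorm d j)
    have hdr : dnorm d ^ r ≤ dnorm d := by
      calc dnorm d ^ r ≤ dnorm d ^ (1 : ℝ) :=
            Real.rpow_le_rpow_of_exponent_le hd1 hr1
        _ = dnorm d := Real.rpow_one _
    have h1 : ‖(d i)⁻¹‖ ^ r ≤ dnorm d :=
      le_trans (Real.rpow_le_rpow (norm_nonneg _) hA hr0.le) hdr
    have h3 : ‖d j‖ ^ r ≤ dnorm d :=
      le_trans (Real.rpow_le_rpow (norm_nonneg _) hC hr0.le) hdr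
    have h2 : ‖u i j‖ ^ r ≤ unorm u := by
      have := le_ciSup (f := fun q : Fin n × Fin n =>
        if (q.1 : ℕ) < (q.2 : ℕ)
        then ‖u q.1 q.2‖ ^ ((((q.2 : ℕ) : ℝ) - ((q.1 : ℕ) : ℝ))⁻¹) else 0)
        (Set.Finite.bddAbove (Set.finite_range _)) (i, j)
      simpa [hij, hr, unorm] using this
    calc ‖(d i)⁻¹ * u i j * d j‖ ^ r
        = ‖(d i)⁻¹‖ ^ r * ‖u i j‖ ^ r * ‖d j‖ ^ r := by
          rw [norm_mul, norm_mul, Real.mul_rpow (by positivity) (norm_nonneg _),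
            Real.mul_rpow (norm_nonneg _) (norm_nonneg _)]
      _ ≤ dnorm d * unorm u * dnorm d := by
          refine mul_le_mul (mul_le_mul h1 h2 (by positivity) hd0) h3 (by positivity) ?_
          positivity
      _ = dnorm d ^ 2 * unorm u := by ring
  · simp only [hij, if_false]
    exact hRHS
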